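/- If two reduced expressions of the longest element w₀ are in the same commutation class (related by a sequence of commuting braid moves s_i s_j = s_j s_i for non-adjacent i, j), then the partial orders they induce on the set of Kostant partitions of any ν (via the inequalities Σ_{t=1}^k ⟨γ_k, β_t⟩ n_t ≤ Σ_{t=1}^k ⟨γ_k, β_t⟩ m_t) coincide. -/

import Mathlib

/-- `β_k = s_{i₁} ⋯ s_{i_{k-1}} α_{i_k}`. -/
noncomputable def kpBeta {I : Type} {V : Type} [AddCommGroup V] [Module ℝ V]
    (s : I → V ≃ₗ[ℝ] V) (α : I → V) {N : ℕ} (ii : Fin N → I) (k : Fin N) : V :=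
  ((((List.ofFn ii).take k.val).map s).prod) (α (ii k))

/-- `γ_k = - s_{i₁} ⋯ s_{i_k} ω^∨_{i_k}`. -/
noncomputable def kpGamma {I : Type} {V : Type} [AddCommGroup V] [Module ℝ V]
    (sD : I → Module.Dual ℝ V ≃ₗ[ℝ] Module.Dual ℝ V) (ω : I → Module.Dual ℝ V)
    {N : ℕ} (ii : Fin N → I) (k : Fin N) : Module.Dual ℝ V :=
  -((((List.ofFn ii).take (k.val + 1)).map sD).prod (ω (ii k)))

/-- The order on Kostant partitions:
`n ⪯ m` iff `Σ_{t=1}^k ⟨γ_k, β_t⟩ n_t ≤ Σ_{t=1}^k ⟨γ_k, β_t⟩ m_t` for all `k`. -/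
noncomputable def kpLE {I : Type} {V : Type} [AddCommGroup V] [Module ℝ V]
    (s : I → V ≃ₗ[ℝ] V) (sD : I → Module.Dual ℝ V ≃ₗ[ℝ] Module.Dual ℝ V)
    (α : I → V) (ω : I → Module.Dual ℝ V)
    {N : ℕ} (ii : Fin N → I) (n m : Fin N → ℕ) : Prop :=
  ∀ k : Fin N,
    ∑ t ∈ Finset.univ.filter (fun t => t ≤ k), kpGamma sD ω ii k (kpBeta s α ii t) * (n t : ℝ)
    ≤ ∑ t ∈ Finset.univ.filter (fun t => t ≤ k), kpGamma sD ω ii k (kpBeta s α ii t) * (m t : ℝ)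


namespace KP




variable {I : Type} {V : Type} [AddCommGroup V] [Module ℝ V]

lemma mulap {M : Type*} [AddCommMonoid M] [Module ℝ M] (e f : M ≃ₗ[ℝ] M) (x : M) :
    (e * f) x = e (f x) := rfl

variable (s : I → V ≃ₗ[ℝ] V)
  (sD : I → Module.Dual ℝ V ≃ₗ[ℝ] Module.Dual ℝ V)
  (α : I → V) (αv : I → Module.Dual ℝ V) (ω : I → Module.Dual ℝ V)

lemma s_invol (hs : ∀ i v, s i v = v - αv i v • α i) (hαα : ∀ i, αv i (α i) = 2) :
    ∀ i v, s i (s i v) = v := by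
  intro i v
  rw [hs i (s i v), hs i v]
  simp only [map_sub, map_smul, hαα, smul_eq_mul]
  module

lemma s_invol' (hs : ∀ i v, s i v = v - αv i v • α i) (hαα : ∀ i, αv i (α i) = 2) :
    ∀ i, s i * s i = 1 := by
  intro i
  apply LinearEquiv.toLinearMap_injective
  apply LinearMap.ext
  intro v
  simpa [mulap] using s_invol s α αv hs hαα i v

lemma sD_apply (hs : ∀ i v, s i v = v - αv i v • α i) (hαα : ∀ i, αv i (α i) = 2)
    (hsD : ∀ i (f : Module.Dual ℝ V) (v : V), sD i f (s i v) = f v) :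
    ∀ i (f : Module.Dual ℝ V) (v : V), sD i f v = f (s i v) := by
  intro i f v
  have := hsD i f (s i v)
  rwa [s_invol s α αv hs hαα] at this

lemma dual_pair (hsD : ∀ i (f : Module.Dual ℝ V) (v : V), sD i f (s i v) = f v)
    (l : List I) (f : Module.Dual ℝ V) (v : V) :
    ((l.map sD).prod f) ((l.map s).prod v) = f v := by
  induction l generalizing f v with
  | nil => simp
  | cons i l ih =>
      simp only [List.map_cons, List.prod_cons, mulap]
      rw [hsD, ih]

lemma ortho [DecidableEq I]
    (hs : ∀ i v, s i v = v - αv i v • α i) (hαα : ∀ i, αv i (α i) = 2)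
    (hω : ∀ i j, ω i (α j) = if i = j then (1 : ℝ) else 0)
    (a b : I) (hc : s a * s b = s b * s a) (hne : s a ≠ s b) :
    a ≠ b ∧ αv a (α b) = 0 ∧ αv b (α a) = 0 := by
  have hab : a ≠ b := by rintro rfl; exact hne rfl
  refine ⟨hab, ?_, ?_⟩
  · have h1 : ω a ((s a * s b) (α b)) = ω a ((s b * s a) (α b)) := by rw [hc]
    simp only [mulap, hs, map_sub, map_smul, hαα, map_sub, map_smul, smul_eq_mul,
      hω, if_pos rfl, if_neg hab, if_neg (Ne.symm hab), if_true] at h1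
    linarith [h1]
  · have h1 : ω b ((s b * s a) (α a)) = ω b ((s a * s b) (α a)) := by rw [hc]
    simp only [mulap, hs, map_sub, map_smul, hαα, map_sub, map_smul, smul_eq_mul,
      hω, if_pos rfl, if_neg hab, if_neg (Ne.symm hab), if_true] at h1
    linarith [h1]



variable {I : Type}

noncomputable def ptake {M : Type*} [Monoid M] (g : I → M) {N : ℕ} (f : Fin N → I) (k : ℕ) : M :=
  (((List.ofFn f).take k).map g).prod

lemma ptake_succ {M : Type*} [Monoid M] (g : I → M) {N : ℕ} (f : Fin N → I) (k : ℕ)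
    (hk : k < N) : ptake g f (k + 1) = ptake g f k * g (f ⟨k, hk⟩) := by
  unfold ptake
  rw [List.take_succ]
  have : (List.ofFn f)[k]? = some (f ⟨k, hk⟩) := by
    rw [List.getElem?_eq_getElem (by simpa using hk), List.getElem_ofFn]
  rw [this]
  simp

lemma ptake_congr {M : Type*} [Monoid M] (g : I → M) {N : ℕ} (f f' : Fin N → I) (k : ℕ)
    (h : ∀ (t : ℕ) (ht : t < N), t < k → f ⟨t, ht⟩ = f' ⟨t, ht⟩) :
    ptake g f k = ptake g f' k := by
  unfold ptake
  congr 2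
  apply List.ext_getElem (by simp)
  intro t h1 h2
  have hlen : t < k ∧ t < N := by
    have := h1
    simp only [List.length_take, List.length_ofFn, lt_min_iff] at this
    exact this
  rw [List.getElem_take, List.getElem_take, List.getElem_ofFn, List.getElem_ofFn]
  exact h t hlen.2 hlen.1

lemma ptake_stable {M : Type*} [Monoid M] (g : I → M) {N : ℕ} (f : Fin N → I) (k : ℕ)
    (hk : N ≤ k) : ptake g f k = ptake g f N := by
  unfold ptake
  rw [List.take_of_length_le (by simpa using hk), List.take_of_length_le (by simp)]



variable {I : Type} {V : Type} [AddCommGroup V] [Module ℝ V]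

lemma ptake_swap_low {M : Type*} [Monoid M] (g : I → M) {N : ℕ} (ii : Fin N → I)
    (P Q : Fin N) (hQ : Q.val = P.val + 1) (k : ℕ) (hk : k ≤ P.val) :
    ptake g (ii ∘ Equiv.swap P Q) k = ptake g ii k := by
  apply ptake_congr
  intro t ht htk
  have h1 : (⟨t, ht⟩ : Fin N) ≠ P := Fin.ne_of_val_ne (by simp; omega)
  have h2 : (⟨t, ht⟩ : Fin N) ≠ Q := Fin.ne_of_val_ne (by simp; omega)
  simp [Function.comp, Equiv.swap_apply_of_ne_of_ne h1 h2]

lemma ptake_swap_high {M : Type*} [Monoid M] (g : I → M) {N : ℕ} (ii : Fin N → I)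
    (P Q : Fin N) (hQ : Q.val = P.val + 1)
    (hg : g (ii P) * g (ii Q) = g (ii Q) * g (ii P))
    (k : ℕ) (hk : P.val + 2 ≤ k) :
    ptake g (ii ∘ Equiv.swap P Q) k = ptake g ii k := by
  induction k, hk using Nat.le_induction with
  | base =>
      have hqN : P.val + 1 < N := hQ ▸ Q.isLt
      have hpN : P.val < N := Nat.lt_of_succ_lt hqN
      have hPe : (⟨P.val, hpN⟩ : Fin N) = P := rfl
      have hQe : (⟨P.val + 1, hqN⟩ : Fin N) = Q := Fin.ext (by simp [hQ])
      rw [show P.val + 2 = (P.val + 1) + 1 from rfl]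
      rw [ptake_succ g _ _ hqN, ptake_succ g _ _ hpN,
        ptake_succ g _ _ hqN, ptake_succ g _ _ hpN]
      rw [ptake_swap_low g ii P Q hQ P.val le_rfl]
      rw [hPe, hQe]
      simp only [Function.comp, Equiv.swap_apply_left, Equiv.swap_apply_right]
      rw [mul_assoc, mul_assoc, hg]
  | succ k hk ih =>
      by_cases hkN : k < N
      · rw [ptake_succ g _ _ hkN, ptake_succ g _ _ hkN, ih]
        have h1 : (⟨k, hkN⟩ : Fin N) ≠ P := Fin.ne_of_val_ne (by simp; omega)
        have h2 : (⟨k, hkN⟩ : Fin N) ≠ Q := Fin.ne_of_val_ne (by simp; omega)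
        simp [Function.comp, Equiv.swap_apply_of_ne_of_ne h1 h2]
      · push_neg at hkN
        rw [ptake_stable g _ _ (by omega : N ≤ k + 1),
          ptake_stable g ii _ (by omega : N ≤ k + 1),
          ← ptake_stable g _ _ hkN, ← ptake_stable g ii _ hkN, ih]


section Sums

variable {N : ℕ}

lemma filter_le_succ (P Q : Fin N) (hQ : Q.val = P.val + 1) :
    Finset.univ.filter (fun t => t ≤ Q) = insert Q (Finset.univ.filter (fun t => t ≤ P)) := by
  ext t
  simp only [Finset.mem_filter, Finset.mem_univ, true_and, Finset.mem_insert]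
  rw [Fin.le_def, Fin.le_def, Fin.ext_iff]
  omega

lemma sum_le_split (g : Fin N → ℝ) (P Q : Fin N) (hQ : Q.val = P.val + 1) :
    ∑ t ∈ Finset.univ.filter (fun t => t ≤ Q), g t
      = g Q + ∑ t ∈ Finset.univ.filter (fun t => t ≤ P), g t := by
  rw [filter_le_succ P Q hQ, Finset.sum_insert (by
    simp only [Finset.mem_filter, Finset.mem_univ, true_and, Fin.le_def]
    omega)]

lemma filter_le_self (P : Fin N) :
    Finset.univ.filter (fun t => t ≤ P) = insert P (Finset.univ.filter (fun t => t < P)) := by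
  ext t
  simp only [Finset.mem_filter, Finset.mem_univ, true_and, Finset.mem_insert]
  rw [Fin.le_def, Fin.lt_def, Fin.ext_iff]
  omega

lemma sum_le_split_self (g : Fin N → ℝ) (P : Fin N) :
    ∑ t ∈ Finset.univ.filter (fun t => t ≤ P), g t
      = g P + ∑ t ∈ Finset.univ.filter (fun t => t < P), g t := by
  rw [filter_le_self P, Finset.sum_insert (by
    simp only [Finset.mem_filter, Finset.mem_univ, true_and, Fin.lt_def]
    omega)]

lemma sum_swap_lt [DecidableEq (Fin N)] (g : Fin N → ℝ) (P Q : Fin N) (hQ : Q.val = P.val + 1) :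
    ∑ t ∈ Finset.univ.filter (fun t => t < P), g (Equiv.swap P Q t)
      = ∑ t ∈ Finset.univ.filter (fun t => t < P), g t := by
  apply Finset.sum_congr rfl
  intro t ht
  simp only [Finset.mem_filter, Finset.mem_univ, true_and, Fin.lt_def] at ht
  rw [Equiv.swap_apply_of_ne_of_ne (Fin.ne_of_val_ne (by omega)) (Fin.ne_of_val_ne (by omega))]

lemma sum_swap_perm [DecidableEq (Fin N)] (g : Fin N → ℝ) (P Q : Fin N) (hQ : Q.val = P.val + 1)
    (k : Fin N) (hk : Q ≤ k) :
    ∑ t ∈ Finset.univ.filter (fun t => t ≤ k), g (Equiv.swap P Q t)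
      = ∑ t ∈ Finset.univ.filter (fun t => t ≤ k), g t := by
  apply Finset.sum_equiv (Equiv.swap P Q)
  · intro t
    simp only [Finset.mem_filter, Finset.mem_univ, true_and]
    rw [Fin.le_def] at hk
    rcases eq_or_ne t P with h | h1
    · rw [h, Equiv.swap_apply_left]
      rw [Fin.le_def, Fin.le_def]
      omega
    · rcases eq_or_ne t Q with h | h2
      · rw [h, Equiv.swap_apply_right]
        rw [Fin.le_def, Fin.le_def]
        omega
      · rw [Equiv.swap_apply_of_ne_of_ne h1 h2]
  · intro t _
    rfl

end Sums

section Core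

variable [DecidableEq I]
  (s : I → V ≃ₗ[ℝ] V)
  (sD : I → Module.Dual ℝ V ≃ₗ[ℝ] Module.Dual ℝ V)
  (α : I → V) (αv : I → Module.Dual ℝ V) (ω : I → Module.Dual ℝ V)
  (hs : ∀ i v, s i v = v - αv i v • α i) (hαα : ∀ i, αv i (α i) = 2)
  (hsD : ∀ i (f : Module.Dual ℝ V) (v : V), sD i f (s i v) = f v)
  (hω : ∀ i j, ω i (α j) = if i = j then (1 : ℝ) else 0)

lemma kpBeta_eq {N : ℕ} (f : Fin N → I) (k : Fin N) :
    kpBeta s α f k = ptake s f k.val (α (f k)) := rfl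

lemma kpGamma_eq {N : ℕ} (f : Fin N → I) (k : Fin N) :
    kpGamma sD ω f k = -(ptake sD f (k.val + 1) (ω (f k))) := rfl

include hs hαα hsD hω in
lemma swap_facts {N : ℕ} (ii : Fin N → I) (P Q : Fin N) (hQ : Q.val = P.val + 1)
    (hc : s (ii P) * s (ii Q) = s (ii Q) * s (ii P)) (hne : s (ii P) ≠ s (ii Q)) :
    (∀ t, kpBeta s α (ii ∘ Equiv.swap P Q) t = kpBeta s α ii (Equiv.swap P Q t)) ∧
    (∀ k, kpGamma sD ω (ii ∘ Equiv.swap P Q) k = kpGamma sD ω ii (Equiv.swap P Q k)) ∧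
    kpGamma sD ω ii Q (kpBeta s α ii P) = 0 ∧
    kpGamma sD ω ii P (kpBeta s α ii Q) = 0 := by
  obtain ⟨hab, hc0, hd0⟩ := ortho s α αv ω hs hαα hω (ii P) (ii Q) hc hne
  set a := ii P with ha
  set b := ii Q with hb
  set σ := Equiv.swap P Q with hσ
  set jj := ii ∘ σ with hjj
  have hqN : P.val + 1 < N := hQ ▸ Q.isLt
  have hpN : P.val < N := Nat.lt_of_succ_lt hqN
  have hPe : (⟨P.val, hpN⟩ : Fin N) = P := rfl
  have hQe : (⟨P.val + 1, hqN⟩ : Fin N) = Q := Fin.ext (by simp [hQ])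
  have hσP : σ P = Q := Equiv.swap_apply_left _ _
  have hσQ : σ Q = P := Equiv.swap_apply_right _ _
  have hσt : ∀ t, t ≠ P → t ≠ Q → σ t = t := fun t => Equiv.swap_apply_of_ne_of_ne
  have jjP : jj P = b := by simp [hjj, Function.comp, hσP, hb]
  have jjQ : jj Q = a := by simp [hjj, Function.comp, hσQ, ha]
  have jjt : ∀ t, t ≠ P → t ≠ Q → jj t = ii t := by
    intro t h1 h2; simp [hjj, Function.comp, hσt t h1 h2]
  have sab : s a (α b) = α b := by rw [hs, hc0]; simp
  have sba : s b (α a) = α a := by rw [hs, hd0]; simp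
  have saa : s a (α a) = -(α a) := by rw [hs, hαα]; module
  -- commutation of duals
  have hcD : sD a * sD b = sD b * sD a := by
    apply LinearEquiv.toLinearMap_injective
    apply LinearMap.ext; intro f
    apply LinearMap.ext; intro v
    have hv : s b (s a v) = s a (s b v) := by
      have h1 : (s b * s a) v = (s a * s b) v := by rw [hc]
      simpa [mulap] using h1
    show (sD a * sD b) f v = (sD b * sD a) f v
    rw [mulap, mulap, sD_apply s sD α αv hs hαα hsD, sD_apply s sD α αv hs hαα hsD,
      sD_apply s sD α αv hs hαα hsD, sD_apply s sD α αv hs hαα hsD, hv]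
  have key1 : sD a (sD b (ω b)) = sD b (ω b) := by
    apply LinearMap.ext; intro v
    rw [sD_apply s sD α αv hs hαα hsD, sD_apply s sD α αv hs hαα hsD,
      sD_apply s sD α αv hs hαα hsD]
    have : s b (s a v) = s b v - αv a v • α a := by
      rw [hs a v, map_sub, map_smul, sba]
    rw [this, map_sub, map_smul, hω, if_neg (Ne.symm hab)]
    simp
  have key2 : sD b (sD a (ω a)) = sD a (ω a) := by
    apply LinearMap.ext; intro v
    rw [sD_apply s sD α αv hs hαα hsD, sD_apply s sD α αv hs hαα hsD,
      sD_apply s sD α αv hs hαα hsD]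
    have : s a (s b v) = s a v - αv b v • α b := by
      rw [hs b v, map_sub, map_smul, sab]
    rw [this, map_sub, map_smul, hω, if_neg hab]
    simp
  have betas : ∀ t, kpBeta s α jj t = kpBeta s α ii (σ t) := by
    intro t
    rcases eq_or_ne t P with h | h1
    · rw [h, hσP, kpBeta_eq, kpBeta_eq, jjP]
      rw [ptake_swap_low s ii P Q hQ P.val le_rfl]
      have : ptake s ii Q.val = ptake s ii (P.val + 1) := by rw [hQ]
      rw [← hb, this, ptake_succ s ii P.val hpN, hPe, mulap, ← ha, sab]
    · rcases eq_or_ne t Q with h | h2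
      · rw [h, hσQ, kpBeta_eq, kpBeta_eq, jjQ]
        have : ptake s jj Q.val = ptake s jj (P.val + 1) := by rw [hQ]
        rw [← ha, this, ptake_succ s jj P.val hpN, hPe, jjP, mulap,
          ptake_swap_low s ii P Q hQ P.val le_rfl, sba]
      · rw [hσt t h1 h2, kpBeta_eq, kpBeta_eq, jjt t h1 h2]
        have hval : t.val < P.val ∨ P.val + 2 ≤ t.val := by
          have e1 : t.val ≠ P.val := fun h => h1 (Fin.ext h)
          have e2 : t.val ≠ Q.val := fun h => h2 (Fin.ext h)
          omega
        rcases hval with h | h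
        · rw [ptake_swap_low s ii P Q hQ t.val (le_of_lt h)]
        · rw [ptake_swap_high s ii P Q hQ hc t.val h]
  have gammas : ∀ k, kpGamma sD ω jj k = kpGamma sD ω ii (σ k) := by
    intro k
    rcases eq_or_ne k P with h | h1
    · rw [h, hσP, kpGamma_eq, kpGamma_eq, jjP, ← hb]
      have e2 : ptake sD ii (Q.val + 1) = ptake sD ii ((P.val + 1) + 1) := by rw [hQ]
      rw [e2, ptake_succ sD jj P.val hpN, hPe, jjP,
        ptake_succ sD ii (P.val + 1) hqN, ptake_succ sD ii P.val hpN, hPe, hQe,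
        ptake_swap_low sD ii P Q hQ P.val le_rfl, mulap, mulap, mulap, ← ha, ← hb, key1]
    · rcases eq_or_ne k Q with h | h2
      · rw [h, hσQ, kpGamma_eq, kpGamma_eq, jjQ, ← ha]
        have e2 : ptake sD jj (Q.val + 1) = ptake sD jj ((P.val + 1) + 1) := by rw [hQ]
        rw [e2, ptake_succ sD jj (P.val + 1) hqN, ptake_succ sD jj P.val hpN, hPe, hQe,
          jjP, jjQ, ptake_succ sD ii P.val hpN, hPe,
          ptake_swap_low sD ii P Q hQ P.val le_rfl, mulap, mulap, mulap, key2]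
      · rw [hσt k h1 h2, kpGamma_eq, kpGamma_eq, jjt k h1 h2]
        have hval : k.val + 1 ≤ P.val ∨ P.val + 2 ≤ k.val + 1 := by
          have e1 : k.val ≠ P.val := fun h => h1 (Fin.ext h)
          have e2 : k.val ≠ Q.val := fun h => h2 (Fin.ext h)
          omega
        rcases hval with h | h
        · rw [ptake_swap_low sD ii P Q hQ (k.val + 1) h]
        · rw [ptake_swap_high sD ii P Q hQ hcD (k.val + 1) h]
  refine ⟨betas, gammas, ?_, ?_⟩
  · -- kpGamma ii Q (kpBeta ii P) = 0
    rw [kpGamma_eq, kpBeta_eq, ← ha, ← hb]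
    have e2 : ptake sD ii (Q.val + 1) = ptake sD ii (P.val + 2) := by rw [hQ]
    have e1 : ptake s ii P.val (α a) = ptake s ii (P.val + 2) (-(α a)) := by
      rw [show P.val + 2 = (P.val + 1) + 1 from rfl,
        ptake_succ s ii (P.val + 1) hqN, ptake_succ s ii P.val hpN, hPe, hQe,
        mulap, mulap, ← ha, ← hb, map_neg, sba, map_neg, saa]
      simp
    rw [e2, e1]
    have := dual_pair s sD hsD ((List.ofFn ii).take (P.val + 2)) (ω b) (-(α a))
    show -(((((List.ofFn ii).take (P.val + 2)).map sD).prod (ω b))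
        (((((List.ofFn ii).take (P.val + 2)).map s).prod) (-(α a)))) = 0
    rw [this, map_neg, hω, if_neg (Ne.symm hab)]
    simp
  · rw [kpGamma_eq, kpBeta_eq, ← ha, ← hb]
    have e2 : ptake s ii Q.val = ptake s ii (P.val + 1) := by rw [hQ]
    rw [e2]
    have := dual_pair s sD hsD ((List.ofFn ii).take (P.val + 1)) (ω a) (α b)
    show -(((((List.ofFn ii).take (P.val + 1)).map sD).prod (ω a))
        (((((List.ofFn ii).take (P.val + 1)).map s).prod) (α b))) = 0
    rw [this, hω, if_neg hab]
    simp


noncomputable def kpSum {N : ℕ} (f : Fin N → I) (x : V → ℕ) (k : Fin N) : ℝ :=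
  ∑ t ∈ Finset.univ.filter (fun t => t ≤ k),
    kpGamma sD ω f k (kpBeta s α f t) * (x (kpBeta s α f t) : ℝ)

include hs hαα hsD hω in
lemma kpSum_swap {N : ℕ} (ii : Fin N → I) (P Q : Fin N) (hQ : Q.val = P.val + 1)
    (hc : s (ii P) * s (ii Q) = s (ii Q) * s (ii P)) (hne : s (ii P) ≠ s (ii Q))
    (x : V → ℕ) (k : Fin N) :
    kpSum s sD α ω (ii ∘ Equiv.swap P Q) x k = kpSum s sD α ω ii x (Equiv.swap P Q k) := by
  obtain ⟨betas, gammas, z1, z2⟩ := swap_facts s sD α αv ω hs hαα hsD hω ii P Q hQ hc hne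
  set σ := Equiv.swap P Q with hσ
  set g : Fin N → ℝ :=
    fun u => kpGamma sD ω ii (σ k) (kpBeta s α ii u) * (x (kpBeta s α ii u) : ℝ) with hg
  have hL : kpSum s sD α ω (ii ∘ σ) x k
      = ∑ t ∈ Finset.univ.filter (fun t => t ≤ k), g (σ t) := by
    unfold kpSum
    apply Finset.sum_congr rfl
    intro t _
    rw [betas, gammas]
  have hR : kpSum s sD α ω ii x (σ k)
      = ∑ t ∈ Finset.univ.filter (fun t => t ≤ σ k), g t := rfl
  rw [hL, hR]
  have hσP : σ P = Q := Equiv.swap_apply_left _ _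
  have hσQ : σ Q = P := Equiv.swap_apply_right _ _
  rcases eq_or_ne k P with h | h1
  · subst h
    rw [hσP]
    rw [sum_le_split_self (fun t => g (σ t)) k, sum_swap_lt g k Q hQ,
      sum_le_split g k Q hQ, sum_le_split_self g k, hσP]
    have : g k = 0 := by
      rw [hg]
      simp only [hσP]
      rw [z1, zero_mul]
    rw [this]
    ring
  · rcases eq_or_ne k Q with h | h2
    · subst h
      rw [hσQ]
      rw [sum_swap_perm g P k hQ k le_rfl, sum_le_split g P k hQ]
      have : g k = 0 := by
        rw [hg]
        simp only [hσQ]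
        rw [z2, zero_mul]
      rw [this]
      ring
    · have hfix : σ k = k := Equiv.swap_apply_of_ne_of_ne h1 h2
      rw [hfix]
      have hval : k.val < P.val ∨ Q ≤ k := by
        have e1 : k.val ≠ P.val := fun h => h1 (Fin.ext h)
        have e2 : k.val ≠ Q.val := fun h => h2 (Fin.ext h)
        rw [Fin.le_def]
        omega
      rcases hval with h | h
      · apply Finset.sum_congr rfl
        intro t ht
        simp only [Finset.mem_filter, Finset.mem_univ, true_and, Fin.le_def] at ht
        rw [Equiv.swap_apply_of_ne_of_ne (Fin.ne_of_val_ne (by omega))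
          (Fin.ne_of_val_ne (by omega))]
      · exact sum_swap_perm g P Q hQ k h

end Core



section Bridge

variable {I : Type}

lemma ofFn_getElem? {N : ℕ} (f : Fin N → I) (t : ℕ) (ht : t < N) :
    (List.ofFn f)[t]? = some (f ⟨t, ht⟩) := by
  rw [List.getElem?_eq_getElem (by simpa using ht), List.getElem_ofFn]

lemma bridge {N : ℕ} (f : Fin N → I) (x y : List I) (a b : I)
    (h : List.ofFn f = x ++ a :: b :: y) :
    ∃ (P Q : Fin N), Q.val = P.val + 1 ∧ f P = a ∧ f Q = b ∧
      x ++ b :: a :: y = List.ofFn (f ∘ Equiv.swap P Q) ∧ N = x.length + y.length + 2 := by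
  have hlen : N = x.length + (y.length + 2) := by
    have := congrArg List.length h
    simp at this
    omega
  set p := x.length with hpdef
  have hp : p + 1 < N := by omega
  have hp0 : p < N := by omega
  refine ⟨⟨p, hp0⟩, ⟨p + 1, hp⟩, rfl, ?_, ?_, ?_, by omega⟩
  · have h1 : (List.ofFn f)[p]? = (x ++ a :: b :: y)[p]? := by rw [h]
    rw [ofFn_getElem? f p hp0, List.getElem?_append_right (le_refl p)] at h1
    simp [hpdef] at h1
    exact h1
  · have h1 : (List.ofFn f)[p + 1]? = (x ++ a :: b :: y)[p + 1]? := by rw [h]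
    rw [ofFn_getElem? f (p + 1) hp, List.getElem?_append_right (by omega : x.length ≤ p + 1)] at h1
    have : p + 1 - x.length = 1 := by omega
    rw [this] at h1
    simp at h1
    exact h1
  · apply List.ext_getElem?
    intro t
    rcases lt_or_ge t p with htp | htp
    · rw [List.getElem?_append_left (by omega : t < x.length),
        ofFn_getElem? _ t (by omega : t < N)]
      have h1 : (List.ofFn f)[t]? = (x ++ a :: b :: y)[t]? := by rw [h]
      rw [ofFn_getElem? f t (by omega : t < N),
        List.getElem?_append_left (by omega : t < x.length)] at h1
      rw [← h1]
      congr 1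
      simp only [Function.comp]
      rw [Equiv.swap_apply_of_ne_of_ne (Fin.ne_of_val_ne (by simp; omega))
        (Fin.ne_of_val_ne (by simp; omega))]
    · rcases lt_or_ge t N with htN | htN
      · rw [List.getElem?_append_right (by omega : x.length ≤ t), ofFn_getElem? _ t htN]
        have h1 : (List.ofFn f)[t]? = (x ++ a :: b :: y)[t]? := by rw [h]
        rw [ofFn_getElem? f t htN,
          List.getElem?_append_right (by omega : x.length ≤ t)] at h1
        rcases Nat.lt_or_ge t (p + 1) with ht1 | ht1
        · -- t = p
          have htp' : t = p := by omega
          subst htp'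
          have e0 : p - x.length = 0 := by omega
          rw [e0] at h1 ⊢
          rw [List.getElem?_cons_zero]
          congr 1
          simp only [Function.comp]
          have : Equiv.swap (⟨p, hp0⟩ : Fin N) ⟨p + 1, hp⟩ ⟨p, hp0⟩ = ⟨p + 1, hp⟩ :=
            Equiv.swap_apply_left _ _
          rw [this]
          have h2 : (List.ofFn f)[p + 1]? = (x ++ a :: b :: y)[p + 1]? := by rw [h]
          rw [ofFn_getElem? f (p + 1) hp,
            List.getElem?_append_right (by omega : x.length ≤ p + 1)] at h2
          have : p + 1 - x.length = 1 := by omega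
          rw [this] at h2
          simp at h2
          exact h2.symm
        · rcases Nat.lt_or_ge t (p + 2) with ht2 | ht2
          · -- t = p + 1
            have htp' : t = p + 1 := by omega
            subst htp'
            have e0 : p + 1 - x.length = 1 := by omega
            rw [e0] at h1 ⊢
            rw [List.getElem?_cons_succ, List.getElem?_cons_zero]
            congr 1
            simp only [Function.comp]
            have : Equiv.swap (⟨p, hp0⟩ : Fin N) ⟨p + 1, hp⟩ ⟨p + 1, hp⟩ = ⟨p, hp0⟩ :=
              Equiv.swap_apply_right _ _
            rw [this]
            have h2 : (List.ofFn f)[p]? = (x ++ a :: b :: y)[p]? := by rw [h]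
            rw [ofFn_getElem? f p hp0,
              List.getElem?_append_right (le_refl p)] at h2
            simp [hpdef] at h2
            exact h2.symm
          · -- t ≥ p + 2
            have e1 : t - x.length = (t - x.length - 2) + 1 + 1 := by omega
            rw [e1] at h1 ⊢
            rw [List.getElem?_cons_succ, List.getElem?_cons_succ] at h1 ⊢
            rw [← h1]
            congr 1
            simp only [Function.comp]
            rw [Equiv.swap_apply_of_ne_of_ne (Fin.ne_of_val_ne (by simp; omega))
              (Fin.ne_of_val_ne (by simp; omega))]
      · -- t ≥ N : both none
        rw [List.getElem?_eq_none (by simp; omega), List.getElem?_eq_none (by simp; omega)]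

end Bridge


section Chain

variable {I : Type} {V : Type} [AddCommGroup V] [Module ℝ V] [DecidableEq I]
  (s : I → V ≃ₗ[ℝ] V)
  (sD : I → Module.Dual ℝ V ≃ₗ[ℝ] Module.Dual ℝ V)
  (α : I → V) (αv : I → Module.Dual ℝ V) (ω : I → Module.Dual ℝ V)
  (hs : ∀ i v, s i v = v - αv i v • α i) (hαα : ∀ i, αv i (α i) = 2)
  (hsD : ∀ i (f : Module.Dual ℝ V) (v : V), sD i f (s i v) = f v)
  (hω : ∀ i j, ω i (α j) = if i = j then (1 : ℝ) else 0)

lemma prod_append_pair (x y : List I) (u w : I) :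
    ((x ++ u :: w :: y).map s).prod = (x.map s).prod * (s u * s w * (y.map s).prod) := by
  simp [List.map_append, List.prod_append, List.prod_cons, mul_assoc]

include hs hαα hsD hω in
lemma chain {N : ℕ} (ii : Fin N → I) (n m : V → ℕ)
    (hred : ∀ l : List I, (l.map s).prod = ((List.ofFn ii).map s).prod → N ≤ l.length)
    (l₂ : List I)
    (h : Relation.ReflTransGen
      (fun l₁ l₂ : List I => ∃ (a b : I) (x y : List I),
        s a * s b = s b * s a ∧ l₁ = x ++ a :: b :: y ∧ l₂ = x ++ b :: a :: y)
      (List.ofFn ii) l₂) :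
    ∃ jj : Fin N → I, l₂ = List.ofFn jj ∧
      ((l₂.map s).prod = ((List.ofFn ii).map s).prod) ∧
      ((∀ k, kpSum s sD α ω ii n k ≤ kpSum s sD α ω ii m k) ↔
       (∀ k, kpSum s sD α ω jj n k ≤ kpSum s sD α ω jj m k)) := by
  induction h with
  | refl => exact ⟨ii, rfl, rfl, Iff.rfl⟩
  | @tail b c hb hstep ih =>
      obtain ⟨jj', hbeq', hprod, hiff⟩ := ih
      subst hbeq'
      obtain ⟨a0, b0, x, y, hc, hbeq, hceq⟩ := hstep
      obtain ⟨P, Q, hQ, hfa, hfb, heq2, hNlen⟩ := bridge jj' x y a0 b0 hbeq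
      have hne : s a0 ≠ s b0 := by
        intro hsab
        have h1 : (((x ++ y).map s)).prod = ((List.ofFn jj').map s).prod := by
          rw [hbeq, prod_append_pair, hsab, s_invol' s α αv hs hαα b0, one_mul,
            List.map_append, List.prod_append]
        have h2 := hred (x ++ y) (h1.trans hprod)
        simp only [List.length_append] at h2
        omega
      have hc' : s (jj' P) * s (jj' Q) = s (jj' Q) * s (jj' P) := by rw [hfa, hfb]; exact hc
      have hne' : s (jj' P) ≠ s (jj' Q) := by rw [hfa, hfb]; exact hne
      refine ⟨jj' ∘ Equiv.swap P Q, by rw [hceq, heq2], ?_, ?_⟩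
      · rw [hceq, prod_append_pair, ← hc, ← prod_append_pair, ← hbeq]
        exact hprod
      · rw [hiff]
        constructor
        · intro hh k
          rw [kpSum_swap s sD α αv ω hs hαα hsD hω jj' P Q hQ hc' hne' n k,
            kpSum_swap s sD α αv ω hs hαα hsD hω jj' P Q hQ hc' hne' m k]
          exact hh _
        · intro hh k
          have e1 := kpSum_swap s sD α αv ω hs hαα hsD hω jj' P Q hQ hc' hne' n
            (Equiv.swap P Q k)
          have e2 := kpSum_swap s sD α αv ω hs hαα hsD hω jj' P Q hQ hc' hne' m
            (Equiv.swap P Q k)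
          rw [Equiv.swap_apply_self] at e1 e2
          rw [← e1, ← e2]
          exact hh _

end Chain

end KP

/-- Two reduced expressions of the longest element `w₀` in the same commutation class
induce the same partial order on Kostant partitions of any `ν`. -/
theorem stmt_6
    {I : Type} [Fintype I] [DecidableEq I]
    {V : Type} [AddCommGroup V] [Module ℝ V]
    (s : I → V ≃ₗ[ℝ] V)
    (sD : I → Module.Dual ℝ V ≃ₗ[ℝ] Module.Dual ℝ V)
    (α : I → V) (αv : I → Module.Dual ℝ V) (ω : I → Module.Dual ℝ V)
    (hs : ∀ i v, s i v = v - αv i v • α i)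
    (hαα : ∀ i, αv i (α i) = 2)
    (hcrys : ∀ i j, ∃ z : ℤ, αv i (α j) = (z : ℝ))
    (hsD : ∀ i (f : Module.Dual ℝ V) (v : V), sD i f (s i v) = f v)
    (hω : ∀ i j, ω i (α j) = if i = j then (1 : ℝ) else 0)
    (N : ℕ) (ii jj : Fin N → I)
    -- both words are reduced expressions of the same (longest) element
    (hsame : ((List.ofFn ii).map s).prod = ((List.ofFn jj).map s).prod)
    (hred : ∀ l : List I, (l.map s).prod = ((List.ofFn ii).map s).prod → N ≤ l.length)
    (hlong : ∀ l : List I, ∃ l' : List I, l'.length ≤ N ∧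
      (l'.map s).prod = (l.map s).prod)
    -- the two words are in the same commutation class
    (hcomm : Relation.ReflTransGen
      (fun l₁ l₂ : List I => ∃ (a b : I) (x y : List I),
        s a * s b = s b * s a ∧ l₁ = x ++ a :: b :: y ∧ l₂ = x ++ b :: a :: y)
      (List.ofFn ii) (List.ofFn jj))
    (ν : V) (n m : V → ℕ)
    -- `n` and `m` are Kostant partitions of `ν`, viewed as multiplicity functions on
    -- the set of positive roots
    (hn : ∑ k, (n (kpBeta s α ii k) : ℝ) • kpBeta s α ii k = ν)
    (hm : ∑ k, (m (kpBeta s α ii k) : ℝ) • kpBeta s α ii k = ν) :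
    (∀ k : Fin N,
        ∑ t ∈ Finset.univ.filter (fun t => t ≤ k),
          kpGamma sD ω ii k (kpBeta s α ii t) * (n (kpBeta s α ii t) : ℝ)
        ≤ ∑ t ∈ Finset.univ.filter (fun t => t ≤ k),
          kpGamma sD ω ii k (kpBeta s α ii t) * (m (kpBeta s α ii t) : ℝ))
    ↔ (∀ k : Fin N,
        ∑ t ∈ Finset.univ.filter (fun t => t ≤ k),
          kpGamma sD ω jj k (kpBeta s α jj t) * (n (kpBeta s α jj t) : ℝ)
        ≤ ∑ t ∈ Finset.univ.filter (fun t => t ≤ k),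
          kpGamma sD ω jj k (kpBeta s α jj t) * (m (kpBeta s α jj t) : ℝ)) := by
  obtain ⟨jj₂, hofn, hprod, hiff⟩ :=
    KP.chain s sD α αv ω hs hαα hsD hω ii n m hred (List.ofFn jj) hcomm
  obtain rfl := List.ofFn_inj.mp hofn
  exact hiff
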